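/- For all real u, |cos((1-i)u)| > 2^{-3/2}·e^{|u|}. -/

import Mathlib

open Complex

lemma cosh_quad (t : ℝ) : 1 + t ^ 2 / 2 ≤ Real.cosh t := by
  rw [← Real.cosh_abs]
  have h0 : (0:ℝ) ≤ |t| / 2 := by positivity
  have hs : |t| / 2 ≤ Real.sinh (|t| / 2) := by
    rcases eq_or_lt_of_le h0 with h | h
    · simp [← h]
    · exact (Real.self_lt_sinh_iff.2 h).le
  have hc : Real.cosh |t| = Real.cosh (|t|/2) ^ 2 + Real.sinh (|t|/2) ^ 2 := by
    rw [← Real.cosh_two_mul]; ring_nf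
  have := Real.cosh_sq (|t|/2)
  have habs : |t| ^ 2 = t ^ 2 := _root_.sq_abs t
  nlinarith [hs, h0]

lemma key (t : ℝ) : 0 ≤ Real.cosh t + 2 * Real.cos t := by
  have hcos := Real.one_sub_sq_div_two_le_cos (x := t)
  rcases le_or_gt (t ^ 2) 4 with h | h
  · nlinarith [cosh_quad t]
  · have h2 : (2:ℝ) ≤ |t| := by nlinarith [_root_.sq_abs t, abs_nonneg t]
    have : Real.cosh 2 ≤ Real.cosh t := by
      rw [Real.cosh_le_cosh]; simpa using h2
    have he : Real.exp 2 ≥ 7 := by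
      have h1 := Real.exp_one_gt_d9
      have h12 : Real.exp 2 = Real.exp 1 * Real.exp 1 := by
        rw [← Real.exp_add]; norm_num
      nlinarith [Real.exp_pos 1]
    have h7 : (7:ℝ)/2 ≤ Real.cosh 2 := by
      rw [Real.cosh_eq]
      nlinarith [Real.exp_pos (-2:ℝ)]
    nlinarith [Real.neg_one_le_cos t]

theorem stmt_3 (u : ℝ) :
    ‖Complex.cos ((1 - Complex.I) * u)‖ > (2:ℝ) ^ (-(3:ℝ)/2) * Real.exp |u| := by
  have hz : (1 - Complex.I) * u = (u:ℂ) + (-u : ℝ) * Complex.I := by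
    push_cast; ring
  have hcos : Complex.cos ((1 - Complex.I) * u) =
      (Real.cos u * Real.cosh u : ℝ) + (Real.sin u * Real.sinh u : ℝ) * Complex.I := by
    rw [hz, Complex.cos_add, Complex.cos_mul_I, Complex.sin_mul_I]
    push_cast
    simp [Complex.cosh_neg, Complex.sinh_neg, ← Complex.ofReal_cos, ← Complex.ofReal_sin,
      ← Complex.ofReal_cosh, ← Complex.ofReal_sinh]
    ring
  have hns : ‖Complex.cos ((1 - Complex.I) * u)‖ ^ 2
      = (Real.cos u * Real.cosh u) ^ 2 + (Real.sin u * Real.sinh u) ^ 2 := by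
    rw [hcos, Complex.sq_norm, Complex.normSq_add_mul_I]
  -- reduce to squared inequality
  have hrpow : ((2:ℝ) ^ (-(3:ℝ)/2)) ^ 2 = 1 / 8 := by
    rw [← Real.rpow_natCast ((2:ℝ) ^ (-(3:ℝ)/2)) 2, ← Real.rpow_mul (by norm_num),
      show (-(3:ℝ)/2 * (2:ℕ)) = ((-3 : ℤ):ℝ) by push_cast; ring, Real.rpow_intCast]
    norm_num
  have hmain : ((2:ℝ) ^ (-(3:ℝ)/2) * Real.exp |u|) ^ 2
      < ‖Complex.cos ((1 - Complex.I) * u)‖ ^ 2 := by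
    rw [hns, mul_pow, hrpow]
    have hsq : Real.exp |u| ^ 2 = Real.exp (2 * |u|) := by
      rw [sq, ← Real.exp_add]; ring_nf
    rw [hsq]
    have hkey := key (2 * u)
    have hid : (Real.cos u * Real.cosh u) ^ 2 + (Real.sin u * Real.sinh u) ^ 2
        = (Real.cos (2*u) + Real.cosh (2*u)) / 2 := by
      have h1 := Real.sin_sq_add_cos_sq u
      have h2 := Real.cosh_sq_sub_sinh_sq u
      rw [Real.cos_two_mul, Real.cosh_two_mul]
      nlinarith
    rw [hid]
    have hexp : Real.exp (2 * |u|) < 2 * Real.cosh (2 * u) := by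
      rw [← Real.cosh_abs, Real.cosh_eq, abs_mul, _root_.abs_two]
      nlinarith [Real.exp_pos (-(2 * |u|))]
    linarith
  have hpos : (0:ℝ) < (2:ℝ) ^ (-(3:ℝ)/2) * Real.exp |u| := by positivity
  nlinarith [abs_nonneg u, norm_nonneg (Complex.cos ((1 - Complex.I) * u)), hmain, hpos]
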